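/- arXiv:2210.00486 — 7 statements merged into one kernel-verified Lean document; each statement's English description precedes it below -/
import Mathlib

section
/- Let R be a commutative ring, ι a finite index set, and c : ι → R. Suppose x_i, v_i, h_i ∈ R (for i ∈ ι) and x, y, u, v ∈ R satisfy Σ_i c i * x_i = x, Σ_i c i * v_i = v, and Σ_i c i * h_i = u * v. Define e := x + u and f := y + v. Then Σ_i c i * (x_i * f − v_i * e + h_i) = x * y; i.e., the locally computed output shares of the secure multiplication protocol reconstruct to the product x·y. -/
/-- Correctness of secure multiplication with a multiplication triplet
`(u, v, h)`, `h = u·v`: if the shares `xs`, `vs`, `hs` reconstruct (via the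
coefficients `c`) to `x`, `v` and `u*v` respectively, then the locally computed
output shares `xs i * f − vs i * e + hs i` (with `e = x + u`, `f = y + v`)
reconstruct to the product `x * y`. -/
theorem secure_mul_correct {R : Type*} [CommRing R] {ι : Type*} [Fintype ι]
    (c xs vs hs : ι → R) (x y u v : R)
    (hx : ∑ i, c i * xs i = x)
    (hv : ∑ i, c i * vs i = v)
    (hh : ∑ i, c i * hs i = u * v)
    (e f : R) (he : e = x + u) (hf : f = y + v) :
    ∑ i, c i * (xs i * f - vs i * e + hs i) = x * y := by
  have : ∑ i, c i * (xs i * f - vs i * e + hs i)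
      = (∑ i, c i * xs i) * f - (∑ i, c i * vs i) * e + ∑ i, c i * hs i := by
    rw [Finset.sum_mul, Finset.sum_mul, ← Finset.sum_sub_distrib, ← Finset.sum_add_distrib]
    congr 1; ext i; ring
  rw [this, hx, hv, hh, he, hf]; ring
end

section
/- Let R be a commutative ring, ι a finite index set, c : ι → R, and n, d, m natural numbers. Suppose X_i (n×d), V_i (d×m), H_i (n×m) are matrices over R for i ∈ ι, and X, U are n×d matrices and Y, V are d×m matrices over R, satisfying Σ_i c i • X_i = X, Σ_i c i • V_i = V, and Σ_i c i • H_i = U ⬝ V. Define E := X + U and F := Y + V. Then Σ_i c i • (X_i ⬝ F − E ⬝ V_i + H_i) = X ⬝ Y. -/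
/-- Correctness of secure matrix multiplication with a matrix multiplication
triplet `(U, V, H)`, `H = U ⬝ V`: if the matrix shares `Xs`, `Vs`, `Hs`
reconstruct (via the coefficients `c`) to `X`, `V` and `U ⬝ V` respectively,
then the locally computed output shares `Xs i ⬝ F − E ⬝ Vs i + Hs i`
(with `E = X + U`, `F = Y + V`) reconstruct to the product `X ⬝ Y`. -/
theorem secure_matrix_mul_correct {R : Type*} [CommRing R] {ι : Type*} [Fintype ι]
    (c : ι → R) {n d m : ℕ}
    (Xs : ι → Matrix (Fin n) (Fin d) R)
    (Vs : ι → Matrix (Fin d) (Fin m) R)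
    (Hs : ι → Matrix (Fin n) (Fin m) R)
    (X U : Matrix (Fin n) (Fin d) R) (Y V : Matrix (Fin d) (Fin m) R)
    (hX : ∑ i, c i • Xs i = X)
    (hV : ∑ i, c i • Vs i = V)
    (hH : ∑ i, c i • Hs i = U * V)
    (E : Matrix (Fin n) (Fin d) R) (F : Matrix (Fin d) (Fin m) R)
    (hE : E = X + U) (hF : F = Y + V) :
    ∑ i, c i • (Xs i * F - E * Vs i + Hs i) = X * Y := by
  subst hE hF
  have h1 : ∑ i, c i • (Xs i * (Y + V)) = X * (Y + V) := by
    rw [← hX, Matrix.sum_mul]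
    simp [Matrix.smul_mul]
  have h2 : ∑ i, c i • ((X + U) * Vs i) = (X + U) * V := by
    rw [← hV, Matrix.mul_sum]
    simp [Matrix.mul_smul]
  simp only [smul_add, smul_sub, Finset.sum_add_distrib, Finset.sum_sub_distrib, h1, h2, hH, neg_one_smul]
  simp only [Matrix.mul_add, Matrix.add_mul, neg_add]
  abel
end

section
/- Fix ℓ ≥ 1 and work in (ZMod (2^ℓ))³ with Φ(1) = (1,1,−1) and Φ(2) = (2,2,−3). There do not exist b₁, b₂ ∈ ZMod (2^ℓ) such that b₁•Φ(1) + b₂•Φ(2) = (1,0,0). Consequently, the two assistant parties cannot reconstruct a vector-space-shared secret even if they collude. -/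
/-- The two assistant parties cannot reconstruct: `(1,0,0)` is not a linear
combination of `Φ(1) = (1,1,−1)` and `Φ(2) = (2,2,−3)` over `ZMod (2^ℓ)`. -/
theorem pMPL_assistants_cannot_reconstruct (ℓ : ℕ) (hℓ : 1 ≤ ℓ) :
    ¬ ∃ b₁ b₂ : ZMod (2^ℓ),
        b₁ • (![1, 1, -1] : Fin 3 → ZMod (2^ℓ))
          + b₂ • (![2, 2, -3] : Fin 3 → ZMod (2^ℓ)) = ![1, 0, 0] := by
  rintro ⟨b₁, b₂, h⟩
  have h0 := congrFun h 0
  have h1 := congrFun h 1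
  simp [Pi.add_apply, Pi.smul_apply] at h0 h1
  have hone : (1 : ZMod (2^ℓ)) = 0 := by rw [← h0, h1]
  have h2 : (1:ℕ) < 2^ℓ := by
    calc (1:ℕ) < 2^1 := by norm_num
    _ ≤ 2^ℓ := Nat.pow_le_pow_right (by norm_num) hℓ
  haveI : Fact (1 < 2^ℓ) := ⟨h2⟩
  exact one_ne_zero hone
end

section
/- Fix ℓ ≥ 1 and work in (ZMod (2^ℓ))³ with Φ(0) = (1,0,1) and Φ(3) = (3,3,−4). There do not exist b₀, b₃ ∈ ZMod (2^ℓ) such that b₀•Φ(0) + b₃•Φ(3) = (1,0,0). Consequently, the privileged party alone (holding Φ(0) and the alternate vector Φ(3)) cannot reconstruct a vector-space-shared secret. -/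
/-- The privileged party alone cannot reconstruct: `(1,0,0)` is not a linear
combination of `Φ(0) = (1,0,1)` and the alternate vector `Φ(3) = (3,3,−4)`
over `ZMod (2^ℓ)`. -/
theorem pMPL_privileged_alone_cannot_reconstruct (ℓ : ℕ) (hℓ : 1 ≤ ℓ) :
    ¬ ∃ b₀ b₃ : ZMod (2^ℓ),
        b₀ • (![1, 0, 1] : Fin 3 → ZMod (2^ℓ))
          + b₃ • (![3, 3, -4] : Fin 3 → ZMod (2^ℓ)) = ![1, 0, 0] := by
  rintro ⟨b₀, b₃, h⟩
  have h0 := congrFun h 0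
  have h1 := congrFun h 1
  have h2 := congrFun h 2
  simp at h0 h1 h2
  have h3 : IsUnit (3 : ZMod (2^ℓ)) := by
    have : ((3:ℕ) : ZMod (2^ℓ)) = 3 := by norm_num
    rw [← this, ZMod.isUnit_iff_coprime]
    exact Nat.Coprime.pow_right _ (by decide)
  obtain ⟨u, hu⟩ := h3
  have hb₃ : b₃ = 0 := by
    calc b₃ = b₃ * ↑u * ↑u⁻¹ := by rw [mul_assoc, Units.mul_inv, mul_one]
    _ = 0 := by rw [hu, h1, zero_mul]
  subst hb₃
  simp at h0 h2
  rw [h2] at h0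
  have hd : (2:ℕ)^ℓ ∣ 1 :=
    (ZMod.natCast_eq_zero_iff 1 (2^ℓ)).mp (by exact_mod_cast h0.symm)
  have := Nat.le_of_dvd Nat.one_pos hd
  have : 2 ≤ 2^ℓ := Nat.one_lt_two_pow (by omega)
  omega
end

section
/- Fix ℓ ≥ 1 and x ∈ ZMod (2^ℓ). The map ψ_x : (ZMod (2^ℓ))² → (ZMod (2^ℓ))² defined by ψ_x(s₁, s₂) = (x + s₁ − s₂, 2x + 2s₁ − 3s₂) is a bijection. Hence, when the randomness (s₁, s₂) of the sharing protocol is uniformly distributed, the joint distribution of the shares (⟨x⟩₁, ⟨x⟩₂) seen by the two assistant parties is uniform on (ZMod (2^ℓ))² and in particular is independent of the secret x. -/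
/-- Privacy against colluding assistant parties: for every secret `x`, the map
sending the sharing randomness `(s₁, s₂)` to the pair of shares
`(⟨x⟩₁, ⟨x⟩₂) = (x + s₁ − s₂, 2x + 2s₁ − 3s₂)` is a bijection on
`(ZMod (2^ℓ))²`, hence uniform randomness yields uniformly distributed shares
independent of `x`. -/
theorem pMPL_assistant_shares_bijective (ℓ : ℕ) (hℓ : 1 ≤ ℓ) (x : ZMod (2^ℓ)) :
    Function.Bijective
      (fun s : ZMod (2^ℓ) × ZMod (2^ℓ) =>
        ((x + s.1 - s.2, 2*x + 2*s.1 - 3*s.2) : ZMod (2^ℓ) × ZMod (2^ℓ))) := by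
  refine Function.bijective_iff_has_inverse.mpr
    ⟨fun p => (p.1 - x + (2*p.1 - p.2), 2*p.1 - p.2), fun s => ?_, fun p => ?_⟩ <;>
    · refine Prod.ext ?_ ?_ <;> ring
end

section
/- Fix ℓ ≥ 1 and x ∈ ZMod (2^ℓ). The map ψ_x : (ZMod (2^ℓ))² → (ZMod (2^ℓ))² defined by ψ_x(s₁, s₂) = (x + s₂, 3x + 3s₁ − 4s₂) is a bijection. Hence, when the randomness (s₁, s₂) of the sharing protocol is uniformly distributed, the joint distribution of the shares (⟨x⟩₀, ⟨x⟩₃) held by the privileged party is uniform on (ZMod (2^ℓ))² and in particular is independent of the secret x. -/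
/-- Privacy against the privileged party: for every secret `x`, the map
sending the sharing randomness `(s₁, s₂)` to the pair of shares
`(⟨x⟩₀, ⟨x⟩₃) = (x + s₂, 3x + 3s₁ − 4s₂)` is a bijection on
`(ZMod (2^ℓ))²`, hence uniform randomness yields uniformly distributed shares
independent of `x`. -/
theorem pMPL_privileged_shares_bijective (ℓ : ℕ) (hℓ : 1 ≤ ℓ) (x : ZMod (2^ℓ)) :
    Function.Bijective
      (fun s : ZMod (2^ℓ) × ZMod (2^ℓ) =>
        ((x + s.2, 3*x + 3*s.1 - 4*s.2) : ZMod (2^ℓ) × ZMod (2^ℓ))) := by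
  have hne : NeZero (2^ℓ) := ⟨by positivity⟩
  have h3 : IsUnit (3 : ZMod (2^ℓ)) := by
    have : ((3:ℕ) : ZMod (2^ℓ)) = 3 := by norm_num
    rw [← this, ZMod.isUnit_iff_coprime]
    exact Nat.Coprime.pow_right ℓ (by norm_num)
  rw [Finite.injective_iff_bijective.symm]
  intro a b hab
  simp only [Prod.mk.injEq] at hab
  obtain ⟨h1, h2⟩ := hab
  have hs2 : a.2 = b.2 := by linear_combination h1
  have hs1 : a.1 = b.1 := by
    have : (3 : ZMod (2^ℓ)) * a.1 = 3 * b.1 := by linear_combination h2 + 4 * hs2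
    exact h3.mul_left_cancel this
  exact Prod.ext hs1 hs2
end

section
/- Fix ℓ ≥ 1 and work in (ZMod (2^ℓ))⁵. With Φ(1) = (−1,1,0,1,3), Φ(2) = (1,1,1,0,1), Φ(3) = (0,0,0,2,3), Φ(4) = (0,0,0,1,2), Φ(5) = (0,2,1,4,9), there do not exist a₁,…,a₅ ∈ ZMod (2^ℓ) with a₁•Φ(1) + a₂•Φ(2) + a₃•Φ(3) + a₄•Φ(4) + a₅•Φ(5) = (1,0,0,0,0). Consequently, the four assistant parties together with the alternate vector — i.e., everything except the privileged party's own vector Φ(0) — cannot reconstruct a shared secret. -/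
/-- In the five-party extension of pMPL over `ZMod (2^ℓ)`, the four assistant
parties together with the alternate vector cannot reconstruct:
`(1,0,0,0,0)` is not a linear combination of `Φ(1) = (−1,1,0,1,3)`,
`Φ(2) = (1,1,1,0,1)`, `Φ(3) = (0,0,0,2,3)`, `Φ(4) = (0,0,0,1,2)`,
`Φ(5) = (0,2,1,4,9)`. -/
theorem pMPL5_assistants_cannot_reconstruct (ℓ : ℕ) (hℓ : 1 ≤ ℓ) :
    ¬ ∃ a₁ a₂ a₃ a₄ a₅ : ZMod (2^ℓ),
        a₁ • (![-1, 1, 0, 1, 3] : Fin 5 → ZMod (2^ℓ))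
          + a₂ • (![1, 1, 1, 0, 1] : Fin 5 → ZMod (2^ℓ))
          + a₃ • (![0, 0, 0, 2, 3] : Fin 5 → ZMod (2^ℓ))
          + a₄ • (![0, 0, 0, 1, 2] : Fin 5 → ZMod (2^ℓ))
          + a₅ • (![0, 2, 1, 4, 9] : Fin 5 → ZMod (2^ℓ)) = ![1, 0, 0, 0, 0] := by
  rintro ⟨a₁, a₂, a₃, a₄, a₅, h⟩
  have h0 := congrFun h 0
  have h1 := congrFun h 1
  have h2 := congrFun h 2
  simp [Pi.add_apply, Pi.smul_apply, smul_eq_mul] at h0 h1 h2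
  have hone : (1 : ZMod (2^ℓ)) = 0 := by linear_combination -h0 - h1 + 2 * h2
  haveI : Fact (1 < 2^ℓ) := ⟨by
    calc 1 < 2 := one_lt_two
    _ ≤ 2^ℓ := Nat.le_self_pow (by omega) 2⟩
  exact one_ne_zero hone
end
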